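/- arXiv:2308.03583 — 2 statements merged into one kernel-verified Lean document; each statement's English description precedes it below -/
import Mathlib

section
/- The diagonal functor Δᵒᵖ → Δᵒᵖ × Δᵒᵖ from the opposite of the simplex category to its square is a final functor. -/
open CategoryTheory Opposite Simplicial

namespace SiftedAux3

variable (m n : SimplexCategory)

abbrev SA := CategoryTheory.StructuredArrow (op m, op n) (Functor.diag (SimplexCategoryᵒᵖ))

/-- an edge in a simplex -/
def edgeHom {i i' : Fin (m.len + 1)} (hi : i ≤ i') : (⦋1⦌ : SimplexCategory) ⟶ m :=
  SimplexCategory.Hom.mk ⟨fun t => if t = 0 then i else i', by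
    intro a b hab
    fin_cases a <;> fin_cases b <;> simp_all⟩

/-- vertex span -/
def V (i : Fin (m.len + 1)) (j : Fin (n.len + 1)) : SA m n :=
  StructuredArrow.mk (Y := op (⦋0⦌ : SimplexCategory))
    ((SimplexCategory.const _ m i).op, (SimplexCategory.const _ n j).op)

/-- edge span -/
def E {i i' : Fin (m.len + 1)} {j j' : Fin (n.len + 1)} (hi : i ≤ i') (hj : j ≤ j') : SA m n :=
  StructuredArrow.mk (Y := op (⦋1⦌ : SimplexCategory))
    ((edgeHom m hi).op, (edgeHom n hj).op)

def edgeToV0 {i i' : Fin (m.len + 1)} {j j' : Fin (n.len + 1)} (hi : i ≤ i') (hj : j ≤ j') :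
    E m n hi hj ⟶ V m n i j :=
  StructuredArrow.homMk (SimplexCategory.const ⦋0⦌ ⦋1⦌ 0).op (by
    apply Prod.ext <;>
    · apply Quiver.Hom.unop_inj
      apply SimplexCategory.Hom.ext_zero_left
      rfl)

def edgeToV1 {i i' : Fin (m.len + 1)} {j j' : Fin (n.len + 1)} (hi : i ≤ i') (hj : j ≤ j') :
    E m n hi hj ⟶ V m n i' j' :=
  StructuredArrow.homMk (SimplexCategory.const ⦋0⦌ ⦋1⦌ 1).op (by
    apply Prod.ext <;>
    · apply Quiver.Hom.unop_inj
      apply SimplexCategory.Hom.ext_zero_left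
      rfl)

/-- from any object to a vertex -/
def toV (T : SA m n) :
    T ⟶ V m n ((T.hom.1.unop).toOrderHom 0) ((T.hom.2.unop).toOrderHom 0) :=
  StructuredArrow.homMk (SimplexCategory.const ⦋0⦌ T.right.unop 0).op (by
    apply Prod.ext <;>
    · apply Quiver.Hom.unop_inj
      apply SimplexCategory.Hom.ext_zero_left
      rfl)

lemma zagVV {i i' : Fin (m.len + 1)} {j j' : Fin (n.len + 1)} (hi : i ≤ i') (hj : j ≤ j') :
    Zigzag (V m n i j) (V m n i' j') :=
  Relation.ReflTransGen.trans
    (Relation.ReflTransGen.single (Or.inr ⟨edgeToV0 m n hi hj⟩))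
    (Relation.ReflTransGen.single (Or.inl ⟨edgeToV1 m n hi hj⟩))

lemma zigzagVV (i i' : Fin (m.len + 1)) (j j' : Fin (n.len + 1)) :
    Zigzag (V m n i j) (V m n i' j') :=
  Relation.ReflTransGen.trans
    (zagVV m n (le_max_left i i') (le_max_left j j'))
    (Zigzag.symm (zagVV m n (le_max_right i i') (le_max_right j j')))

instance : IsConnected (SA m n) := by
  have : Nonempty (SA m n) := ⟨V m n 0 0⟩
  apply zigzag_isConnected
  intro T₁ T₂
  have z1 : Zigzag T₁ (V m n ((T₁.hom.1.unop).toOrderHom 0) ((T₁.hom.2.unop).toOrderHom 0)) :=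
    Relation.ReflTransGen.single (Or.inl ⟨toV m n T₁⟩)
  have z3 : Zigzag (V m n ((T₂.hom.1.unop).toOrderHom 0) ((T₂.hom.2.unop).toOrderHom 0)) T₂ :=
    Relation.ReflTransGen.single (Or.inr ⟨toV m n T₂⟩)
  exact z1.trans ((zigzagVV m n _ _ _ _).trans z3)

end SiftedAux3

/-- The diagonal functor `Δᵒᵖ → Δᵒᵖ × Δᵒᵖ` is final, i.e. `Δᵒᵖ` is sifted. -/
theorem stmt_3 : (Functor.diag (SimplexCategoryᵒᵖ)).Final := by
  constructor
  rintro ⟨⟨m⟩, ⟨n⟩⟩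
  exact SiftedAux3.instIsConnectedSA m n
end

section
/- Let I, J, K, L be categories and suppose given functors p : I → K, w : I → J, v : K → L, q : J → L together with a natural transformation σ : v ∘ p ⟶ q ∘ w. If for every pair (j, k) ∈ J × K the induced map of sets colim_{i ∈ (w/j ×_I p\k)} * → Hom_L(q j, v k) — concretely, the map from the set of connected components of the category of triples (i, a : w i → j, b : k → p i) to Hom_L(q j, v k), sending (i, a, b) to v(b) composed with σ_i composed with q(a) — is a bijection, then for every functor f : K → X into a cocomplete category X, the canonical mate transformation Lan_w (f ∘ p) ⟶ (Lan_v f) ∘ q is an isomorphism. -/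
open CategoryTheory

universe u v

variable {I J K L : Type u} [Category.{u} I] [Category.{u} J] [Category.{u} K] [Category.{u} L]

/-- Given a lax square `σ : v ∘ p ⟶ q ∘ w`, the category of triples
`(i, a : w i ⟶ j, b : k ⟶ p i)`, used to compute the composite proarrow
(companion of `w` composed with conjoint of `p`) at `(j, k)`. -/
structure ExactSqIndex (w : I ⥤ J) (p : I ⥤ K) (j : J) (k : K) where
  pt : I
  a : w.obj pt ⟶ j
  b : k ⟶ p.obj pt

instance {w : I ⥤ J} {p : I ⥤ K} {j : J} {k : K} : Category (ExactSqIndex w p j k) where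
  Hom A B := { m : A.pt ⟶ B.pt // w.map m ≫ B.a = A.a ∧ A.b ≫ p.map m = B.b }
  id A := ⟨𝟙 A.pt, by simp⟩
  comp {A B C} m n := ⟨m.1 ≫ n.1, by
    obtain ⟨hm1, hm2⟩ := m.2
    obtain ⟨hn1, hn2⟩ := n.2
    constructor
    · rw [Functor.map_comp, Category.assoc, hn1, hm1]
    · rw [Functor.map_comp, ← Category.assoc, hm2, hn2]⟩
  id_comp m := Subtype.ext (Category.id_comp m.1)
  comp_id m := Subtype.ext (Category.comp_id m.1)
  assoc m n o := Subtype.ext (Category.assoc m.1 n.1 o.1)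

/-- The canonical comparison map sending a triple `(i, a, b)` to the composite
`v(b) ≫ σ_i ≫ q(a) : v k ⟶ q j`. -/
def ExactSqIndex.comparison {w : I ⥤ J} {p : I ⥤ K} {v : K ⥤ L} {q : J ⥤ L}
    (σ : p ⋙ v ⟶ w ⋙ q) {j : J} {k : K} (A : ExactSqIndex w p j k) :
    v.obj k ⟶ q.obj j :=
  v.map A.b ≫ σ.app A.pt ≫ q.map A.a

section Aux

variable (w : I ⥤ J) (p : I ⥤ K) (v : K ⥤ L) (q : J ⥤ L) (σ : p ⋙ v ⟶ w ⋙ q)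

/-- The induced functor on costructured arrow categories. -/
@[simps]
def exactSqG (j : J) : CostructuredArrow w j ⥤ CostructuredArrow v (q.obj j) where
  obj g := CostructuredArrow.mk (σ.app g.left ≫ q.map g.hom)
  map {g g'} m := CostructuredArrow.homMk (p.map m.left) (by
    have h1 := σ.naturality m.left
    have h2 := CostructuredArrow.w m
    dsimp at h1 h2 ⊢
    rw [← h2, q.map_comp, reassoc_of% h1.symm])
  map_id g := by
    apply CostructuredArrow.hom_ext
    simp
  map_comp m n := by
    apply CostructuredArrow.hom_ext
    simp

variable {w p v q}

/-- Lift an element of the fiber of the comparison map to an object of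
the structured arrow category over `exactSqG`. -/
@[simps]
def exactSqLift {j : J} (Y : CostructuredArrow v (q.obj j))
    (A : ExactSqIndex w p j Y.left) (hA : A.comparison σ = Y.hom) :
    StructuredArrow Y (exactSqG w p v q σ j) :=
  StructuredArrow.mk (Y := CostructuredArrow.mk A.a)
    (CostructuredArrow.homMk A.b (by exact hA))

/-- A morphism in `ExactSqIndex` between fiber elements lifts. -/
def exactSqLiftHom {j : J} (Y : CostructuredArrow v (q.obj j))
    {A B : ExactSqIndex w p j Y.left} (n : A ⟶ B)
    (hA : A.comparison σ = Y.hom) (hB : B.comparison σ = Y.hom) :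
    exactSqLift σ Y A hA ⟶ exactSqLift σ Y B hB :=
  StructuredArrow.homMk (CostructuredArrow.homMk n.1 n.2.1) (by
    apply CostructuredArrow.hom_ext
    exact n.2.2)

/-- The triple associated to a structured arrow lies in the fiber. -/
lemma exactSq_comparison_w {j : J} {Y : CostructuredArrow v (q.obj j)}
    (S : StructuredArrow Y (exactSqG w p v q σ j)) :
    (ExactSqIndex.mk S.right.left S.right.hom S.hom.left).comparison σ = Y.hom := by
  have := CostructuredArrow.w S.hom
  simpa [ExactSqIndex.comparison, exactSqG] using this

/-- The lift of the triple associated to `S` maps to `S`. -/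
def exactSqLiftToSelf {j : J} {Y : CostructuredArrow v (q.obj j)}
    (S : StructuredArrow Y (exactSqG w p v q σ j)) :
    exactSqLift σ Y ⟨S.right.left, S.right.hom, S.hom.left⟩ (exactSq_comparison_w σ S) ⟶ S :=
  StructuredArrow.homMk (CostructuredArrow.homMk (𝟙 _) (by exact (congrArg (· ≫ S.right.hom) (w.map_id _)).trans (Category.id_comp _))) (by
    apply CostructuredArrow.hom_ext
    exact (congrArg (S.hom.left ≫ ·) (p.map_id _)).trans (Category.comp_id _))

end Aux


/-- Beck–Chevalley for exact squares: given a lax square `σ : v ∘ p ⟶ q ∘ w` such that for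
all `(j, k)` the induced map from the connected components of the category of triples
`(i, a : w i ⟶ j, b : k ⟶ p i)` to `Hom_L(v k, q j)`, `(i,a,b) ↦ v(b) ≫ σᵢ ≫ q(a)`,
is a bijection (i.e. it is surjective, and two triples have equal composites precisely
when they are connected by a zigzag), then for every functor `f : K ⥤ X` into a
cocomplete category `X` the mate `Lan_w (f ∘ p) ⟶ (Lan_v f) ∘ q` is an isomorphism. -/
theorem stmt_19 (w : I ⥤ J) (p : I ⥤ K) (v : K ⥤ L) (q : J ⥤ L)
    (σ : p ⋙ v ⟶ w ⋙ q)
    (hexact : ∀ (j : J) (k : K),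
      (Function.Surjective (fun A : ExactSqIndex w p j k => A.comparison σ)) ∧
      (∀ A B : ExactSqIndex w p j k, A.comparison σ = B.comparison σ ↔ Zigzag A B))
    {X : Type v} [Category.{u} X] [Limits.HasColimits X] (f : K ⥤ X) :
    IsIso ((w.leftKanExtension (p ⋙ f)).descOfIsLeftKanExtension
      (w.leftKanExtensionUnit (p ⋙ f)) (q ⋙ v.leftKanExtension f)
      (Functor.whiskerLeft p (v.leftKanExtensionUnit f) ≫ (p.associator v (v.leftKanExtension f)).inv ≫
        Functor.whiskerRight σ (v.leftKanExtension f) ≫ (w.associator q (v.leftKanExtension f)).hom)) := by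
  -- the functor on comma categories is final
  have hfinal : ∀ j : J, (exactSqG w p v q σ j).Final := by
    intro j
    constructor
    intro Y
    obtain ⟨A₀, hA₀⟩ := (hexact j Y.left).1 Y.hom
    have conn : ∀ {A B : ExactSqIndex w p j Y.left} (hz : Zigzag A B)
        (hA : A.comparison σ = Y.hom) (hB : B.comparison σ = Y.hom),
        Zigzag (exactSqLift σ Y A hA) (exactSqLift σ Y B hB) := by
      intro A B hz
      induction hz with
      | refl => intro hA hB; rfl
      | @tail B' C hz' hzag ih =>
        intro hA hC
        have hB' : B'.comparison σ = Y.hom := by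
          have h := ((hexact j Y.left).2 B' C).mpr (Zigzag.of_zag hzag)
          rw [h, hC]
        refine (ih hA hB').trans (Zigzag.of_zag ?_)
        rcases hzag with ⟨⟨n⟩⟩ | ⟨⟨n⟩⟩
        · exact Or.inl ⟨exactSqLiftHom σ Y n hB' hC⟩
        · exact Or.inr ⟨exactSqLiftHom σ Y n hC hB'⟩
    have : Nonempty (StructuredArrow Y (exactSqG w p v q σ j)) :=
      ⟨exactSqLift σ Y A₀ hA₀⟩
    refine zigzag_isConnected fun S T => ?_
    have zS : Zag (exactSqLift σ Y ⟨S.right.left, S.right.hom, S.hom.left⟩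
        (exactSq_comparison_w σ S)) S := Or.inl ⟨exactSqLiftToSelf σ S⟩
    have zT : Zag (exactSqLift σ Y ⟨T.right.left, T.right.hom, T.hom.left⟩
        (exactSq_comparison_w σ T)) T := Or.inl ⟨exactSqLiftToSelf σ T⟩
    have hz : Zigzag (ExactSqIndex.mk S.right.left S.right.hom S.hom.left)
        (ExactSqIndex.mk T.right.left T.right.hom T.hom.left) := by
      rw [← (hexact j Y.left).2]
      rw [exactSq_comparison_w σ S, exactSq_comparison_w σ T]
    exact ((Zigzag.of_zag zS.symm).trans (conn hz _ _)).trans (Zigzag.of_zag zT)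
  set β : p ⋙ f ⟶ w ⋙ (q ⋙ v.leftKanExtension f) :=
    Functor.whiskerLeft p (v.leftKanExtensionUnit f) ≫ (p.associator v (v.leftKanExtension f)).inv ≫
      Functor.whiskerRight σ (v.leftKanExtension f) ≫ (w.associator q (v.leftKanExtension f)).hom with hβ
  have hpt : (Functor.LeftExtension.mk (q ⋙ v.leftKanExtension f) β).IsPointwiseLeftKanExtension := by
    intro j
    have hv := Functor.isPointwiseLeftKanExtensionOfIsLeftKanExtension
      (v.leftKanExtension f) (v.leftKanExtensionUnit f) (q.obj j)
    haveI := hfinal j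
    have hw := (Functor.Final.isColimitWhiskerEquiv (exactSqG w p v q σ j) _).symm hv
    refine Limits.IsColimit.ofIsoColimit hw (Limits.Cocones.ext (Iso.refl _) fun g => ?_)
    simp [hβ, exactSqG]
    refine (Category.comp_id _).trans ?_
    exact (Category.assoc _ _ _).symm
  have hlke : (q ⋙ v.leftKanExtension f).IsLeftKanExtension β := hpt.isLeftKanExtension
  exact (Functor.isLeftKanExtension_iff_isIso _ (w.leftKanExtensionUnit (p ⋙ f)) β
    (Functor.descOfIsLeftKanExtension_fac _ _ _ _)).mp hlke
end
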